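/- Let M be a finite-dimensional complex vector space, n ≥ 1, and let φ, ε_1, …, ε_n ∈ End(M) be pairwise commuting endomorphisms. Let c be the endomorphism of the n-fold tensor power M^{⊗n} determined by c(m_1 ⊗ ⋯ ⊗ m_n) = m_n ⊗ m_1 ⊗ ⋯ ⊗ m_{n−1}. Then tr(c ∘ ((ε_1∘φ) ⊗ (ε_2∘φ) ⊗ ⋯ ⊗ (ε_n∘φ)), M^{⊗n}) = tr(ε_1 ε_2 ⋯ ε_n φ^n, M). -/

import Mathlib

open scoped TensorProduct

noncomputable section

/-- The `n`-fold tensor power of `M` over `ℂ`. -/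
abbrev TPow (M : Type) [AddCommGroup M] [Module ℂ M] (n : ℕ) : Type :=
  PiTensorProduct ℂ (fun _ : Fin n => M)

namespace TraceCycleAux

set_option linter.unusedSectionVars false

lemma finRotate_symm_zero (N : ℕ) : (finRotate (N + 1)).symm 0 = Fin.last N := by
  rw [Equiv.symm_apply_eq, finRotate_last]

lemma finRotate_symm_succ (N : ℕ) (j : Fin N) :
    (finRotate (N + 1)).symm j.succ = j.castSucc := by
  rw [Equiv.symm_apply_eq, finRotate_succ_apply]
  ext
  rw [Fin.val_succ, Fin.val_add_one_of_lt (Fin.castSucc_lt_last j), Fin.coe_castSucc]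

lemma trace_conj_eq {N P : Type} [AddCommGroup N] [Module ℂ N] [AddCommGroup P] [Module ℂ P]
    (T : N →ₗ[ℂ] N) (e : N ≃ₗ[ℂ] P) :
    LinearMap.trace ℂ P (e.toLinearMap ∘ₗ T ∘ₗ e.symm.toLinearMap) = LinearMap.trace ℂ N T := by
  have h := LinearMap.trace_conj' T e
  rw [LinearEquiv.conj_apply, LinearMap.comp_assoc] at h
  exact h

variable {M : Type} [AddCommGroup M] [Module ℂ M] [FiniteDimensional ℂ M]

section swap

lemma trace_comm_comp_map (a b : Module.End ℂ M) :
    LinearMap.trace ℂ (M ⊗[ℂ] M)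
      ((TensorProduct.comm ℂ M M).toLinearMap ∘ₗ TensorProduct.map a b)
      = LinearMap.trace ℂ M (a ∘ₗ b) := by
  classical
  set B := Module.finBasis ℂ M with hB
  set bT := Module.Basis.tensorProduct B B with hbT
  rw [LinearMap.trace_eq_matrix_trace ℂ bT, LinearMap.trace_eq_matrix_trace ℂ B]
  have hmat : ∀ p : Fin (Module.finrank ℂ M) × Fin (Module.finrank ℂ M),
      (LinearMap.toMatrix bT bT
        ((TensorProduct.comm ℂ M M).toLinearMap ∘ₗ TensorProduct.map a b)) p p
      = (LinearMap.toMatrix B B b) p.1 p.2 * (LinearMap.toMatrix B B a) p.2 p.1 := by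
    rintro ⟨i, j⟩
    rw [LinearMap.toMatrix_apply]
    simp only [hbT, Module.Basis.tensorProduct_apply, LinearMap.comp_apply,
      LinearEquiv.coe_coe, TensorProduct.map_tmul, TensorProduct.comm_tmul,
      Module.Basis.tensorProduct_repr_tmul_apply]
    rw [LinearMap.toMatrix_apply, LinearMap.toMatrix_apply, smul_eq_mul, mul_comm]
  rw [Matrix.trace, Matrix.trace]
  rw [LinearMap.toMatrix_comp B B B]
  calc ∑ p, (LinearMap.toMatrix bT bT
        ((TensorProduct.comm ℂ M M).toLinearMap ∘ₗ TensorProduct.map a b)).diag p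
      = ∑ p : Fin (Module.finrank ℂ M) × Fin (Module.finrank ℂ M),
          (LinearMap.toMatrix B B b) p.1 p.2 * (LinearMap.toMatrix B B a) p.2 p.1 :=
        Finset.sum_congr rfl fun p _ => hmat p
    _ = ∑ i, ∑ j, (LinearMap.toMatrix B B b) i j * (LinearMap.toMatrix B B a) j i := by
        rw [Fintype.sum_prod_type]
    _ = Matrix.trace (LinearMap.toMatrix B B b * LinearMap.toMatrix B B a) := by
        rw [Matrix.trace]
        simp [Matrix.diag, Matrix.mul_apply]
    _ = Matrix.trace (LinearMap.toMatrix B B a * LinearMap.toMatrix B B b) :=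
        Matrix.trace_mul_comm _ _
    _ = ∑ i, (LinearMap.toMatrix B B a * LinearMap.toMatrix B B b).diag i := rfl

variable (A B : Type) [AddCommGroup A] [Module ℂ A] [FiniteDimensional ℂ A]
  [AddCommGroup B] [Module ℂ B] [FiniteDimensional ℂ B]

/-- the swap of the two `B` factors in `(A ⊗ B) ⊗ B`. -/
def Shat : (A ⊗[ℂ] B) ⊗[ℂ] B ≃ₗ[ℂ] (A ⊗[ℂ] B) ⊗[ℂ] B :=
  (TensorProduct.assoc ℂ A B B) ≪≫ₗ
    (TensorProduct.congr (LinearEquiv.refl ℂ A) (TensorProduct.comm ℂ B B)) ≪≫ₗ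
    (TensorProduct.assoc ℂ A B B).symm

@[simp] lemma Shat_apply (a : A) (b₁ b₂ : B) :
    Shat A B ((a ⊗ₜ[ℂ] b₁) ⊗ₜ[ℂ] b₂) = (a ⊗ₜ[ℂ] b₂) ⊗ₜ[ℂ] b₁ := by
  simp [Shat]

lemma trace_map_comp_Shat (X : (A ⊗[ℂ] B) →ₗ[ℂ] (A ⊗[ℂ] B)) (b : Module.End ℂ B) :
    LinearMap.trace ℂ ((A ⊗[ℂ] B) ⊗[ℂ] B)
      (TensorProduct.map X b ∘ₗ (Shat A B).toLinearMap)
      = LinearMap.trace ℂ (A ⊗[ℂ] B) (X ∘ₗ TensorProduct.map LinearMap.id b) := by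
  obtain ⟨ξ, rfl⟩ := (homTensorHomEquiv ℂ A B A B).surjective X
  induction ξ using TensorProduct.induction_on with
  | zero => simp
  | add ξ₁ ξ₂ h₁ h₂ =>
      rw [map_add, TensorProduct.map_add_left, LinearMap.add_comp, map_add,
        LinearMap.add_comp, map_add, h₁, h₂]
  | tmul x y =>
      rw [homTensorHomEquiv_apply, TensorProduct.homTensorHomMap_apply]
      have hconj : (TensorProduct.assoc ℂ A B B).conj
          (TensorProduct.map (TensorProduct.map x y) b ∘ₗ (Shat A B).toLinearMap)
          = TensorProduct.map x
              (TensorProduct.map y b ∘ₗ (TensorProduct.comm ℂ B B).toLinearMap) := by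
        ext a b₁ b₂
        simp [LinearEquiv.conj_apply, Shat]
      calc LinearMap.trace ℂ ((A ⊗[ℂ] B) ⊗[ℂ] B)
            (TensorProduct.map (TensorProduct.map x y) b ∘ₗ (Shat A B).toLinearMap)
          = LinearMap.trace ℂ (A ⊗[ℂ] (B ⊗[ℂ] B)) (TensorProduct.map x
              (TensorProduct.map y b ∘ₗ (TensorProduct.comm ℂ B B).toLinearMap)) := by
            rw [← hconj, LinearMap.trace_conj']
        _ = LinearMap.trace ℂ A x *
              LinearMap.trace ℂ (B ⊗[ℂ] B)
                (TensorProduct.map y b ∘ₗ (TensorProduct.comm ℂ B B).toLinearMap) := by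
            rw [LinearMap.trace_tensorProduct']
        _ = LinearMap.trace ℂ A x * LinearMap.trace ℂ B (y ∘ₗ b) := by
            congr 1
            have h2 : TensorProduct.map y b ∘ₗ (TensorProduct.comm ℂ B B).toLinearMap
                = (TensorProduct.comm ℂ B B).toLinearMap ∘ₗ TensorProduct.map b y := by
              ext b₁ b₂; simp
            rw [h2, trace_comm_comp_map]
            exact LinearMap.trace_mul_comm ℂ b y
        _ = LinearMap.trace ℂ (A ⊗[ℂ] B)
              (TensorProduct.map x y ∘ₗ TensorProduct.map LinearMap.id b) := by
            rw [← TensorProduct.map_comp, LinearMap.comp_id, LinearMap.trace_tensorProduct']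

end swap

section pitensor

variable (M)

/-- The cyclic rotation endomorphism of `TPow M n`. -/
def cyc (n : ℕ) : TPow M n →ₗ[ℂ] TPow M n :=
  (PiTensorProduct.reindex ℂ (fun _ : Fin n => M) (finRotate n)).toLinearMap

lemma cyc_tprod (n : ℕ) (m : Fin n → M) :
    cyc M n (PiTensorProduct.tprod ℂ m)
      = PiTensorProduct.tprod ℂ (fun k => m ((finRotate n).symm k)) := by
  simp [cyc, PiTensorProduct.reindex_tprod]

/-- Splitting off the last tensor factor. -/
def Esplit (n : ℕ) : TPow M (n + 1) ≃ₗ[ℂ] TPow M n ⊗[ℂ] M :=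
  (PiTensorProduct.reindex ℂ (fun _ : Fin (n+1) => M) finSumFinEquiv.symm) ≪≫ₗ
    (PiTensorProduct.tmulEquiv ℂ M).symm ≪≫ₗ
    TensorProduct.congr (LinearEquiv.refl ℂ _)
      (PiTensorProduct.subsingletonEquiv (0 : Fin 1))

lemma Esplit_tprod (n : ℕ) (m : Fin (n + 1) → M) :
    Esplit M n (PiTensorProduct.tprod ℂ m)
      = (PiTensorProduct.tprod ℂ (fun k : Fin n => m k.castSucc)) ⊗ₜ[ℂ] m (Fin.last n) := by
  simp only [Esplit, LinearEquiv.trans_apply, PiTensorProduct.reindex_tprod]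
  rw [Equiv.symm_symm]
  rw [PiTensorProduct.tmulEquiv_symm_apply]
  simp only [TensorProduct.congr_tmul, LinearEquiv.refl_apply,
    PiTensorProduct.subsingletonEquiv_apply_tprod]
  have h1 : (fun i : Fin n => m (finSumFinEquiv (Sum.inl i))) = fun k => m k.castSucc := by
    funext i
    congr 1
  have h2 : finSumFinEquiv (Sum.inr (0 : Fin 1)) = Fin.last n := by
    simp [finSumFinEquiv_apply_right, Fin.ext_iff]
  rw [h1, h2]

lemma Esplit_symm_tmul (n : ℕ) (u : Fin n → M) (x : M) :
    (Esplit M n).symm ((PiTensorProduct.tprod ℂ u) ⊗ₜ[ℂ] x)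
      = PiTensorProduct.tprod ℂ (Fin.snoc u x) := by
  rw [LinearEquiv.symm_apply_eq, Esplit_tprod]
  simp

instance tpow_findim (n : ℕ) : FiniteDimensional ℂ (TPow M n) := by
  induction n with
  | zero => exact Module.Finite.equiv (PiTensorProduct.isEmptyEquiv (Fin 0)).symm
  | succ n ih => exact Module.Finite.equiv (Esplit M n).symm

/-- Splitting off the last two tensor factors. -/
def E2 (n : ℕ) : TPow M (n + 2) ≃ₗ[ℂ] (TPow M n ⊗[ℂ] M) ⊗[ℂ] M :=
  Esplit M (n+1) ≪≫ₗ TensorProduct.congr (Esplit M n) (LinearEquiv.refl ℂ M)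

lemma E2_tprod (n : ℕ) (v : Fin (n + 2) → M) :
    E2 M n (PiTensorProduct.tprod ℂ v)
      = ((PiTensorProduct.tprod ℂ (fun k : Fin n => v k.castSucc.castSucc))
          ⊗ₜ[ℂ] v ((Fin.last n).castSucc)) ⊗ₜ[ℂ] v (Fin.last (n+1)) := by
  rw [E2, LinearEquiv.trans_apply, Esplit_tprod, TensorProduct.congr_tmul, Esplit_tprod,
    LinearEquiv.refl_apply]

end pitensor

section main

variable (M)

lemma trace_cyc_map : ∀ (n : ℕ) (f : Fin (n+1) → Module.End ℂ M),
    LinearMap.trace ℂ (TPow M (n+1)) (cyc M (n+1) ∘ₗ PiTensorProduct.map f)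
      = LinearMap.trace ℂ M ((List.ofFn f).reverse.prod)
  | 0, f => by
    have h1 : cyc M 1 ∘ₗ PiTensorProduct.map f
        = ((PiTensorProduct.subsingletonEquiv (0 : Fin 1) :
              TPow M 1 ≃ₗ[ℂ] M).symm).toLinearMap ∘ₗ (f 0) ∘ₗ
            ((PiTensorProduct.subsingletonEquiv (0 : Fin 1) :
              TPow M 1 ≃ₗ[ℂ] M).symm).symm.toLinearMap := by
      ext t
      simp only [LinearMap.compMultilinearMap_apply, LinearMap.comp_apply,
        LinearEquiv.coe_coe, PiTensorProduct.map_tprod, cyc_tprod, LinearEquiv.symm_symm,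
        PiTensorProduct.subsingletonEquiv_apply_tprod]
      rw [LinearEquiv.eq_symm_apply, PiTensorProduct.subsingletonEquiv_apply_tprod]
      rw [Subsingleton.elim ((finRotate 1).symm (0 : Fin 1)) (0 : Fin 1)]
    rw [h1, trace_conj_eq]
    simp
  | (n+1), f => by
    classical
    -- data for the reduction
    set g : Fin (n+1) → Module.End ℂ M :=
      Fin.snoc (fun k : Fin n => f k.castSucc.castSucc) (f (Fin.last (n+1))) with hg
    set b : Module.End ℂ M := f ((Fin.last n).castSucc) with hb
    set g' : Fin (n+1) → Module.End ℂ M :=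
      Fin.snoc (fun k : Fin n => f k.castSucc.castSucc)
        (f (Fin.last (n+1)) * f ((Fin.last n).castSucc)) with hg'
    set X : (TPow M n ⊗[ℂ] M) →ₗ[ℂ] (TPow M n ⊗[ℂ] M) :=
      (Esplit M n).toLinearMap ∘ₗ (cyc M (n+1) ∘ₗ PiTensorProduct.map g)
        ∘ₗ (Esplit M n).symm.toLinearMap with hX
    -- key structural identity 1
    have key : (E2 M n).toLinearMap ∘ₗ (cyc M (n+2) ∘ₗ PiTensorProduct.map f)
        = (TensorProduct.map X b ∘ₗ (Shat (TPow M n) M).toLinearMap)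
            ∘ₗ (E2 M n).toLinearMap := by
      ext t
      simp only [LinearMap.compMultilinearMap_apply, LinearMap.comp_apply,
        LinearEquiv.coe_coe, PiTensorProduct.map_tprod, cyc_tprod, E2_tprod, Shat_apply,
        TensorProduct.map_tmul]
      have hXapp : X ((PiTensorProduct.tprod ℂ (fun k : Fin n => t k.castSucc.castSucc))
            ⊗ₜ[ℂ] t (Fin.last (n+1)))
          = (PiTensorProduct.tprod ℂ (fun k : Fin n =>
              g ((finRotate (n+1)).symm k.castSucc)
                ((Fin.snoc (fun k : Fin n => t k.castSucc.castSucc) (t (Fin.last (n+1)))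
                    : Fin (n+1) → M) ((finRotate (n+1)).symm k.castSucc))))
            ⊗ₜ[ℂ] (g ((finRotate (n+1)).symm (Fin.last n))
                ((Fin.snoc (fun k : Fin n => t k.castSucc.castSucc) (t (Fin.last (n+1)))
                    : Fin (n+1) → M) ((finRotate (n+1)).symm (Fin.last n)))) := by
        rw [hX]
        simp only [LinearMap.comp_apply, LinearEquiv.coe_coe]
        rw [Esplit_symm_tmul, PiTensorProduct.map_tprod, cyc_tprod, Esplit_tprod]
      rw [hXapp]
      have hAll : ∀ i : Fin (n+1),
          f ((finRotate (n+2)).symm i.castSucc) (t ((finRotate (n+2)).symm i.castSucc))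
            = g ((finRotate (n+1)).symm i)
                ((Fin.snoc (fun k : Fin n => t k.castSucc.castSucc) (t (Fin.last (n+1)))
                    : Fin (n+1) → M) ((finRotate (n+1)).symm i)) := by
        intro i
        induction i using Fin.cases with
        | zero =>
            rw [Fin.castSucc_zero, finRotate_symm_zero, finRotate_symm_zero,
              Fin.snoc_last, hg, Fin.snoc_last]
        | succ j =>
            rw [← Fin.succ_castSucc, finRotate_symm_succ, finRotate_symm_succ,
              hg, Fin.snoc_castSucc, Fin.snoc_castSucc]
      have hlast : f ((finRotate (n+2)).symm (Fin.last (n+1)))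
            (t ((finRotate (n+2)).symm (Fin.last (n+1))))
          = b (t ((Fin.last n).castSucc)) := by
        rw [← Fin.succ_last, finRotate_symm_succ, hb]
      have hblock : (fun k : Fin n =>
            f ((finRotate (n+2)).symm k.castSucc.castSucc)
              (t ((finRotate (n+2)).symm k.castSucc.castSucc)))
          = fun k : Fin n =>
              g ((finRotate (n+1)).symm k.castSucc)
                ((Fin.snoc (fun k : Fin n => t k.castSucc.castSucc) (t (Fin.last (n+1)))
                    : Fin (n+1) → M) ((finRotate (n+1)).symm k.castSucc)) :=
        funext fun k => hAll k.castSucc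
      rw [hblock, hAll (Fin.last n), hlast]
    -- key structural identity 2
    have key2 : (Esplit M n).toLinearMap ∘ₗ (cyc M (n+1) ∘ₗ PiTensorProduct.map g')
        = (X ∘ₗ TensorProduct.map LinearMap.id b) ∘ₗ (Esplit M n).toLinearMap := by
      ext t
      simp only [LinearMap.compMultilinearMap_apply, LinearMap.comp_apply,
        LinearEquiv.coe_coe, PiTensorProduct.map_tprod, cyc_tprod, Esplit_tprod,
        TensorProduct.map_tmul, LinearMap.id_coe, id_eq]
      have hXapp : X ((PiTensorProduct.tprod ℂ (fun k : Fin n => t k.castSucc))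
            ⊗ₜ[ℂ] b (t (Fin.last n)))
          = (PiTensorProduct.tprod ℂ (fun k : Fin n =>
              g ((finRotate (n+1)).symm k.castSucc)
                ((Fin.snoc (fun k : Fin n => t k.castSucc) (b (t (Fin.last n)))
                    : Fin (n+1) → M) ((finRotate (n+1)).symm k.castSucc))))
            ⊗ₜ[ℂ] (g ((finRotate (n+1)).symm (Fin.last n))
                ((Fin.snoc (fun k : Fin n => t k.castSucc) (b (t (Fin.last n)))
                    : Fin (n+1) → M) ((finRotate (n+1)).symm (Fin.last n)))) := by
        rw [hX]
        simp only [LinearMap.comp_apply, LinearEquiv.coe_coe]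
        rw [Esplit_symm_tmul, PiTensorProduct.map_tprod, cyc_tprod, Esplit_tprod]
      rw [hXapp]
      have hv : ∀ i : Fin (n+1),
          g i ((Fin.snoc (fun k : Fin n => t k.castSucc) (b (t (Fin.last n)))
              : Fin (n+1) → M) i) = g' i (t i) := by
        intro i
        induction i using Fin.lastCases with
        | last =>
            rw [Fin.snoc_last, hg, Fin.snoc_last, hg', Fin.snoc_last]
            rfl
        | cast j =>
            rw [Fin.snoc_castSucc, hg, Fin.snoc_castSucc, hg', Fin.snoc_castSucc]
      have hb1 : (fun k : Fin n =>
            g ((finRotate (n+1)).symm k.castSucc)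
              ((Fin.snoc (fun k : Fin n => t k.castSucc) (b (t (Fin.last n)))
                  : Fin (n+1) → M) ((finRotate (n+1)).symm k.castSucc)))
          = fun k : Fin n => g' ((finRotate (n+1)).symm k.castSucc)
              (t ((finRotate (n+1)).symm k.castSucc)) :=
        funext fun k => hv _
      rw [hb1, hv]
    -- trace computation
    have hcanc : (E2 M n).toLinearMap ∘ₗ (cyc M (n+2) ∘ₗ PiTensorProduct.map f)
          ∘ₗ (E2 M n).symm.toLinearMap
        = TensorProduct.map X b ∘ₗ (Shat (TPow M n) M).toLinearMap := by
      rw [← LinearMap.comp_assoc, key, LinearMap.comp_assoc, LinearEquiv.comp_coe,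
        LinearEquiv.symm_trans_self, LinearEquiv.refl_toLinearMap, LinearMap.comp_id]
    have hcanc2 : (Esplit M n).toLinearMap ∘ₗ (cyc M (n+1) ∘ₗ PiTensorProduct.map g')
          ∘ₗ (Esplit M n).symm.toLinearMap
        = X ∘ₗ TensorProduct.map LinearMap.id b := by
      rw [← LinearMap.comp_assoc, key2, LinearMap.comp_assoc, LinearEquiv.comp_coe,
        LinearEquiv.symm_trans_self, LinearEquiv.refl_toLinearMap, LinearMap.comp_id]
    have hlist : (List.ofFn f).reverse.prod = (List.ofFn g').reverse.prod := by
      rw [List.ofFn_succ' f, List.ofFn_succ' g', List.ofFn_succ'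
        (fun i : Fin (n+1) => f i.castSucc)]
      have hgc : (fun k : Fin n => g' k.castSucc) = fun k : Fin n => f k.castSucc.castSucc := by
        funext k
        rw [hg', Fin.snoc_castSucc]
      have hgl : g' (Fin.last n) = f (Fin.last (n+1)) * f ((Fin.last n).castSucc) := by
        rw [hg', Fin.snoc_last]
      simp only [List.concat_eq_append, List.reverse_append, List.reverse_cons,
        List.reverse_nil, List.nil_append, List.cons_append, List.prod_cons, hgc, hgl]
      rw [mul_assoc]
    calc LinearMap.trace ℂ (TPow M (n+2)) (cyc M (n+2) ∘ₗ PiTensorProduct.map f)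
        = LinearMap.trace ℂ ((TPow M n ⊗[ℂ] M) ⊗[ℂ] M)
            (TensorProduct.map X b ∘ₗ (Shat (TPow M n) M).toLinearMap) := by
          rw [← hcanc]
          exact (trace_conj_eq (N := TPow M (n+2)) (P := (TPow M n ⊗[ℂ] M) ⊗[ℂ] M) (cyc M (n+2) ∘ₗ PiTensorProduct.map f) (E2 M n)).symm
      _ = LinearMap.trace ℂ (TPow M n ⊗[ℂ] M) (X ∘ₗ TensorProduct.map LinearMap.id b) :=
          trace_map_comp_Shat (TPow M n) M X b
      _ = LinearMap.trace ℂ (TPow M (n+1)) (cyc M (n+1) ∘ₗ PiTensorProduct.map g') := by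
          rw [← hcanc2]
          exact trace_conj_eq (N := TPow M (n+1)) (P := TPow M n ⊗[ℂ] M) (cyc M (n+1) ∘ₗ PiTensorProduct.map g') (Esplit M n)
      _ = LinearMap.trace ℂ M ((List.ofFn g').reverse.prod) := trace_cyc_map n g'
      _ = LinearMap.trace ℂ M ((List.ofFn f).reverse.prod) := by rw [hlist]

end main

end TraceCycleAux

/--
Let `M` be a finite-dimensional complex vector space, `n ≥ 1`, and let
`φ, ε 0, …, ε (n-1)` be pairwise commuting endomorphisms of `M`.  Let `c` be the endomorphism
of `M^{⊗n}` determined by `c (m_1 ⊗ ⋯ ⊗ m_n) = m_n ⊗ m_1 ⊗ ⋯ ⊗ m_{n-1}` (i.e. the `k`-th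
factor of the image is `m_{k-1}`, indices mod `n`).  Then
`tr (c ∘ ((ε 1 ∘ φ) ⊗ ⋯ ⊗ (ε n ∘ φ))) = tr (ε 1 ⋯ ε n φ^n , M)`.
-/
theorem trace_cycle_tensor_power
    (M : Type) [AddCommGroup M] [Module ℂ M] [FiniteDimensional ℂ M]
    (n : ℕ) (hn : 1 ≤ n)
    (φ : Module.End ℂ M) (ε : Fin n → Module.End ℂ M)
    (hcomm : ∀ f ∈ ({φ} ∪ Set.range ε : Set (Module.End ℂ M)),
      ∀ g ∈ ({φ} ∪ Set.range ε : Set (Module.End ℂ M)), Commute f g)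
    (c : TPow M n →ₗ[ℂ] TPow M n)
    (hc : ∀ m : Fin n → M,
      c (PiTensorProduct.tprod ℂ m) = PiTensorProduct.tprod ℂ (fun k => m ((finRotate n).symm k))) :
    LinearMap.trace ℂ (TPow M n)
        (c ∘ₗ PiTensorProduct.map (fun i => ε i ∘ₗ φ))
      = LinearMap.trace ℂ M
          ((Finset.univ.noncommProd ε
              (fun a _ b _ _ => hcomm (ε a) (Or.inr ⟨a, rfl⟩) (ε b) (Or.inr ⟨b, rfl⟩)))
            * φ ^ n) := by
  classical
  obtain ⟨m, rfl⟩ : ∃ m, n = m + 1 := ⟨n - 1, by omega⟩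
  have hφε : ∀ i, Commute φ (ε i) := fun i =>
    hcomm φ (Or.inl rfl) (ε i) (Or.inr ⟨i, rfl⟩)
  have hεε : ∀ i j, Commute (ε i) (ε j) := fun i j =>
    hcomm (ε i) (Or.inr ⟨i, rfl⟩) (ε j) (Or.inr ⟨j, rfl⟩)
  have hceq : c = TraceCycleAux.cyc M (m+1) := by
    ext t
    simp only [LinearMap.compMultilinearMap_apply]
    rw [hc, TraceCycleAux.cyc_tprod]
  rw [hceq, TraceCycleAux.trace_cyc_map M m (fun i => ε i ∘ₗ φ)]
  congr 1
  -- now pure algebra in the endomorphism monoid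
  have hFF : ∀ i j : Fin (m+1), Commute (ε i * φ) (ε j * φ) := by
    intro i j
    have h1 : Commute (ε i) (ε j * φ) := (hεε i j).mul_right (hφε i).symm
    have h2 : Commute φ (ε j * φ) := (hφε j).mul_right (Commute.refl φ)
    exact h1.mul_left h2
  have hB : ∀ l : List (Module.End ℂ M), (∀ a ∈ l, Commute φ a) →
      (l.map (· * φ)).prod = l.prod * φ ^ l.length := by
    intro l
    induction l with
    | nil => simp
    | cons a l ih =>
        intro h
        have hmem : ∀ b ∈ l, Commute φ b := fun b hb => h b (List.mem_cons_of_mem a hb)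
        have hφl : Commute φ l.prod := Commute.list_prod_right _ _ hmem
        simp only [List.map_cons, List.prod_cons, List.length_cons]
        rw [ih hmem, mul_assoc a φ (l.prod * φ ^ l.length),
          ← mul_assoc φ l.prod (φ ^ l.length), hφl.eq,
          mul_assoc l.prod φ (φ ^ l.length), ← pow_succ' φ l.length,
          ← mul_assoc a l.prod (φ ^ (l.length + 1))]
  have hrev : (List.ofFn fun i : Fin (m+1) => ε i * φ).reverse.prod
      = (List.ofFn fun i : Fin (m+1) => ε i * φ).prod := by
    apply List.Perm.prod_eq' (List.reverse_perm _)
    rw [List.pairwise_reverse]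
    rw [List.pairwise_ofFn]
    intro i j _
    exact (hFF j i)
  have hmap : (List.ofFn fun i : Fin (m+1) => ε i * φ) = (List.ofFn ε).map (· * φ) := by
    rw [List.map_ofFn]
    rfl
  have hC : (Finset.univ.noncommProd ε
        (fun a _ b _ _ => hcomm (ε a) (Or.inr ⟨a, rfl⟩) (ε b) (Or.inr ⟨b, rfl⟩)))
      = (List.ofFn ε).prod := by
    rw [List.ofFn_eq_map]
    show Multiset.noncommProd ((Finset.univ : Finset (Fin (m+1))).val.map ε) _ = _
    have huniv : (Finset.univ : Finset (Fin (m+1))).val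
        = (List.finRange (m+1) : Multiset (Fin (m+1))) := rfl
    have hms : (Multiset.map ε Finset.univ.val)
        = (((List.finRange (m+1)).map ε : List (Module.End ℂ M)) : Multiset (Module.End ℂ M)) := by
      rw [huniv]
      rfl
    have key : ∀ (s : Multiset (Module.End ℂ M)) (hs : {x | x ∈ s}.Pairwise Commute)
        (_ : s = (((List.finRange (m+1)).map ε : List (Module.End ℂ M))
            : Multiset (Module.End ℂ M))),
        Multiset.noncommProd s hs = (List.map ε (List.finRange (m+1))).prod := by
      intro s hs hEq
      subst hEq
      exact Multiset.noncommProd_coe _ _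
    exact key _ _ hms
  have hF : (fun i : Fin (m+1) => ε i ∘ₗ φ) = fun i : Fin (m+1) => ε i * φ := rfl
  have hmem : ∀ a ∈ List.ofFn ε, Commute φ a := by
    intro a ha
    have hr : a ∈ Set.range ε := List.mem_ofFn.1 ha
    obtain ⟨i, rfl⟩ := hr
    exact hφε i
  rw [hF, hrev, hmap, hB (List.ofFn ε) hmem, hC, List.length_ofFn]


end
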